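/- arXiv:0906.5133 — 2 statements merged into one kernel-verified Lean document; each statement's English description precedes it below -/
import Mathlib

section
/- Let P : ℂ → ℝ be a real-valued polynomial in Re w and Im w that is subharmonic (ΔP ≥ 0 on ℂ) and whose Laplacian ΔP does not vanish identically. If φ : ℂ → ℂ is an entire holomorphic function such that the composition P ∘ φ : ℂ → ℝ is harmonic on ℂ, then φ is constant. -/
/-- The Laplacian of a function `u : ℂ → ℝ` in the real coordinates of `ℂ`. -/
noncomputable def lap (u : ℂ → ℝ) (z : ℂ) : ℝ :=
  fderiv ℝ (fun w => fderiv ℝ u w 1) z 1 +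
    fderiv ℝ (fun w => fderiv ℝ u w Complex.I) z Complex.I

/-- The real polynomial map `ℂ → ℝ` associated to a polynomial with real coefficients in
the two real variables `Re w`, `Im w`. -/
noncomputable def polyMap (p : MvPolynomial (Fin 2) ℝ) (w : ℂ) : ℝ :=
  MvPolynomial.eval ![w.re, w.im] p

open MvPolynomial Complex

noncomputable def pD (p : MvPolynomial (Fin 2) ℝ) (w : ℂ) : ℂ →L[ℝ] ℝ :=
  polyMap (pderiv 0 p) w • Complex.reCLM + polyMap (pderiv 1 p) w • Complex.imCLM

lemma pD_apply (p : MvPolynomial (Fin 2) ℝ) (w v : ℂ) :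
    pD p w v = polyMap (pderiv 0 p) w * v.re + polyMap (pderiv 1 p) w * v.im := by
  simp [pD, smul_eq_mul]

lemma hasFDerivAt_polyMap (p : MvPolynomial (Fin 2) ℝ) (w : ℂ) :
    HasFDerivAt (polyMap p) (pD p w) w := by
  induction p using MvPolynomial.induction_on with
  | C a =>
      have h0 : pD (C a) w = 0 := by
        ext v; simp [pD, polyMap]
      rw [h0]
      have : (polyMap (C a)) = fun _ : ℂ => a := by funext z; simp [polyMap]
      rw [this]
      exact hasFDerivAt_const _ _
  | add p q hp hq =>
      have h : HasFDerivAt (fun z : ℂ => polyMap p z + polyMap q z) _ w := hp.add hq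
      have he : (fun z : ℂ => polyMap p z + polyMap q z) = polyMap (p + q) := by
        funext z; simp [polyMap]
      rw [he] at h
      refine h.congr_fderiv ?_
      ext v; simp [pD, polyMap, smul_eq_mul]; ring
  | mul_X p n hp =>
      fin_cases n
      · have h1 : HasFDerivAt (fun z : ℂ => polyMap p z * z.re)
            (polyMap p w • Complex.reCLM + w.re • pD p w) w := by
          exact hp.mul (Complex.reCLM.hasFDerivAt (x := w))
        have h2 : (fun z : ℂ => polyMap p z * z.re) = polyMap (p * X 0) := by
          funext z; simp [polyMap]
        rw [h2] at h1
        refine h1.congr_fderiv ?_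
        ext v; simp [pD, polyMap, pderiv_mul, smul_eq_mul]; ring
      · have h1 : HasFDerivAt (fun z : ℂ => polyMap p z * z.im)
            (polyMap p w • Complex.imCLM + w.im • pD p w) w := by
          exact hp.mul (Complex.imCLM.hasFDerivAt (x := w))
        have h2 : (fun z : ℂ => polyMap p z * z.im) = polyMap (p * X 1) := by
          funext z; simp [polyMap]
        rw [h2] at h1
        refine h1.congr_fderiv ?_
        ext v; simp [pD, polyMap, pderiv_mul, smul_eq_mul]; ring

lemma fderiv_polyMap (p : MvPolynomial (Fin 2) ℝ) (w : ℂ) :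
    fderiv ℝ (polyMap p) w = pD p w := (hasFDerivAt_polyMap p w).fderiv

lemma lap_polyMap (p : MvPolynomial (Fin 2) ℝ) (z : ℂ) :
    lap (polyMap p) z =
      polyMap (pderiv 0 (pderiv 0 p)) z + polyMap (pderiv 1 (pderiv 1 p)) z := by
  unfold lap
  have e1 : (fun w => fderiv ℝ (polyMap p) w 1) = fun w => polyMap (pderiv 0 p) w := by
    funext w; rw [fderiv_polyMap, pD_apply]; simp
  have eI : (fun w => fderiv ℝ (polyMap p) w Complex.I)
      = fun w => polyMap (pderiv 1 p) w := by
    funext w; rw [fderiv_polyMap, pD_apply]; simp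
  rw [e1, eI, fderiv_polyMap, fderiv_polyMap, pD_apply, pD_apply]
  simp

lemma continuous_polyMap (p : MvPolynomial (Fin 2) ℝ) : Continuous (polyMap p) :=
  continuous_iff_continuousAt.2 fun w =>
    (hasFDerivAt_polyMap p w).differentiableAt.continuousAt

section chain

variable {φ : ℂ → ℂ}

lemma hasFDerivAt_comp (hφ : Differentiable ℂ φ) (p : MvPolynomial (Fin 2) ℝ) (w : ℂ) :
    HasFDerivAt (fun z => polyMap p (φ z))
      ((pD p (φ w)).comp
        (((1 : ℂ →L[ℂ] ℂ).smulRight (deriv φ w)).restrictScalars ℝ)) w :=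
  (hasFDerivAt_polyMap p (φ w)).comp w
    (((hφ w).hasDerivAt.hasFDerivAt).restrictScalars ℝ)

lemma fderiv_comp_apply (hφ : Differentiable ℂ φ) (p : MvPolynomial (Fin 2) ℝ) (w v : ℂ) :
    fderiv ℝ (fun z => polyMap p (φ z)) w v = pD p (φ w) (v * deriv φ w) := by
  rw [(hasFDerivAt_comp hφ p w).fderiv]
  simp [smul_eq_mul]

end chain
section chain2

variable {φ : ℂ → ℂ}

/-- The directional derivative of `polyMap p ∘ φ` in direction `e`, as a function. -/
noncomputable def gdir (p : MvPolynomial (Fin 2) ℝ) (φ : ℂ → ℂ) (e : ℂ) (w : ℂ) : ℝ :=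
  polyMap (MvPolynomial.pderiv 0 p) (φ w) * (e * deriv φ w).re +
    polyMap (MvPolynomial.pderiv 1 p) (φ w) * (e * deriv φ w).im

lemma gdir_eq (hφ : Differentiable ℂ φ) (p : MvPolynomial (Fin 2) ℝ) (e : ℂ) :
    (fun w => fderiv ℝ (fun z => polyMap p (φ z)) w e) = gdir p φ e := by
  funext w
  rw [fderiv_comp_apply hφ, pD_apply, gdir]

lemma differentiable_deriv (hφ : Differentiable ℂ φ) : Differentiable ℂ (deriv φ) := by
  have h2 : ContDiff ℂ 2 φ := hφ.contDiff
  have := (contDiff_succ_iff_deriv (n := 1)).mp (by exact_mod_cast h2)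
  exact this.2.2.differentiable one_ne_zero

lemma fderiv_gdir (hφ : Differentiable ℂ φ) (p : MvPolynomial (Fin 2) ℝ) (e v z : ℂ) :
    fderiv ℝ (gdir p φ e) z v =
      pD (MvPolynomial.pderiv 0 p) (φ z) (v * deriv φ z) * (e * deriv φ z).re +
        polyMap (MvPolynomial.pderiv 0 p) (φ z) * (v * (e * deriv (deriv φ) z)).re +
      (pD (MvPolynomial.pderiv 1 p) (φ z) (v * deriv φ z) * (e * deriv φ z).im +
        polyMap (MvPolynomial.pderiv 1 p) (φ z) * (v * (e * deriv (deriv φ) z)).im) := by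
  have hφ' : Differentiable ℂ (deriv φ) := differentiable_deriv hφ
  have hBc : HasDerivAt (fun w => e * deriv φ w) (e * deriv (deriv φ) z) z :=
    ((hφ' z).hasDerivAt).const_mul e
  have hBre : HasFDerivAt (fun w => (e * deriv φ w).re)
      (Complex.reCLM.comp
        (((1 : ℂ →L[ℂ] ℂ).smulRight (e * deriv (deriv φ) z)).restrictScalars ℝ)) z :=
    (Complex.reCLM.hasFDerivAt).comp z ((hBc.hasFDerivAt).restrictScalars ℝ)
  have hBim : HasFDerivAt (fun w => (e * deriv φ w).im)
      (Complex.imCLM.comp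
        (((1 : ℂ →L[ℂ] ℂ).smulRight (e * deriv (deriv φ) z)).restrictScalars ℝ)) z :=
    (Complex.imCLM.hasFDerivAt).comp z ((hBc.hasFDerivAt).restrictScalars ℝ)
  have hA0 := hasFDerivAt_comp hφ (MvPolynomial.pderiv 0 p) z
  have hA1 := hasFDerivAt_comp hφ (MvPolynomial.pderiv 1 p) z
  have hG := (hA0.mul hBre).add (hA1.mul hBim)
  unfold gdir
  rw [HasFDerivAt.fderiv (f := fun w => polyMap (MvPolynomial.pderiv 0 p) (φ w) * (e * deriv φ w).re + polyMap (MvPolynomial.pderiv 1 p) (φ w) * (e * deriv φ w).im) hG]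
  simp [pD_apply, smul_eq_mul]
  ring

end chain2

lemma lap_comp {φ : ℂ → ℂ} (hφ : Differentiable ℂ φ) (p : MvPolynomial (Fin 2) ℝ) (z : ℂ) :
    lap (fun w => polyMap p (φ w)) z = Complex.normSq (deriv φ z) * lap (polyMap p) (φ z) := by
  rw [lap_polyMap]
  unfold lap
  rw [gdir_eq hφ p 1, gdir_eq hφ p Complex.I,
    fderiv_gdir hφ p 1 1 z, fderiv_gdir hφ p Complex.I Complex.I z]
  simp only [pD_apply, Complex.mul_re, Complex.mul_im, Complex.normSq_apply,
    Complex.one_re, Complex.one_im, Complex.I_re, Complex.I_im]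
  ring

/-- If `P` is a subharmonic real polynomial in `Re w, Im w` whose Laplacian does not vanish
identically, and `φ : ℂ → ℂ` is entire with `P ∘ φ` harmonic on `ℂ`, then `φ` is
constant. -/
theorem entire_const_of_comp_harmonic
    (p : MvPolynomial (Fin 2) ℝ)
    (hsub : ∀ z : ℂ, 0 ≤ lap (polyMap p) z)
    (hnz : ∃ z : ℂ, lap (polyMap p) z ≠ 0)
    (φ : ℂ → ℂ) (hφ : Differentiable ℂ φ)
    (hharm : ∀ z : ℂ, lap (fun w => polyMap p (φ w)) z = 0) :
    ∀ s t : ℂ, φ s = φ t := by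
  intro s t
  by_contra hne
  have hQcont : Continuous (fun z => lap (polyMap p) z) := by
    have : (fun z => lap (polyMap p) z)
        = fun z => polyMap (MvPolynomial.pderiv 0 (MvPolynomial.pderiv 0 p)) z
          + polyMap (MvPolynomial.pderiv 1 (MvPolynomial.pderiv 1 p)) z :=
      funext fun z => lap_polyMap p z
    rw [this]
    exact (continuous_polyMap _).add (continuous_polyMap _)
  have key : ∀ z, Complex.normSq (deriv φ z) * lap (polyMap p) (φ z) = 0 := fun z => by
    rw [← lap_comp hφ p z]; exact hharm z
  have hdnz : ∃ z, deriv φ z ≠ 0 := by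
    by_contra h; push_neg at h
    exact hne (is_const_of_deriv_eq_zero hφ h s t)
  have hQφ : ∀ z, lap (polyMap p) (φ z) = 0 := by
    intro z
    by_cases hz : deriv φ z = 0
    · have han : AnalyticOnNhd ℂ (deriv φ) Set.univ :=
        analyticOnNhd_univ_iff_differentiable.mpr (differentiable_deriv hφ)
      rcases (han z (Set.mem_univ z)).eventually_eq_zero_or_eventually_ne_zero with h0 | hev
      · have hall := han.eqOn_zero_of_preconnected_of_eventuallyEq_zero isPreconnected_univ
          (Set.mem_univ z) h0
        obtain ⟨z0, hz0⟩ := hdnz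
        exact absurd (hall (Set.mem_univ z0)) hz0
      · have hev0 : ∀ᶠ w in nhdsWithin z {z}ᶜ, lap (polyMap p) (φ w) = 0 := by
          filter_upwards [hev] with w hw
          rcases mul_eq_zero.mp (key w) with h | h
          · exact absurd (Complex.normSq_eq_zero.mp h) hw
          · exact h
        have hc : Filter.Tendsto (fun w => lap (polyMap p) (φ w)) (nhdsWithin z {z}ᶜ)
            (nhds (lap (polyMap p) (φ z))) :=
          ((hQcont.continuousAt).comp (hφ.continuous.continuousAt)).tendsto.mono_left
            nhdsWithin_le_nhds
        have h2 : Filter.Tendsto (fun w => lap (polyMap p) (φ w)) (nhdsWithin z {z}ᶜ)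
            (nhds 0) := tendsto_const_nhds.congr' (hev0.mono fun w hw => hw.symm)
        exact tendsto_nhds_unique hc h2
    · rcases mul_eq_zero.mp (key z) with h | h
      · exact absurd (Complex.normSq_eq_zero.mp h) hz
      · exact h
  have hdense : Dense (Set.range φ) := by
    by_contra hd
    rw [Dense] at hd
    push_neg at hd
    obtain ⟨x, hx⟩ := hd
    rw [Metric.mem_closure_iff] at hx
    push_neg at hx
    obtain ⟨ε, hε, hxε⟩ := hx
    have hne0 : ∀ z, φ z - x ≠ 0 := by
      intro z h
      have := hxε (φ z) (Set.mem_range_self z)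
      rw [sub_eq_zero] at h
      rw [h] at this
      simp at this
      exact absurd this (not_le.mpr hε)
    have hdiff : Differentiable ℂ (fun z => (φ z - x)⁻¹) :=
      (hφ.sub_const x).inv hne0
    have hbdd : Bornology.IsBounded (Set.range fun z => (φ z - x)⁻¹) := by
      rw [Metric.isBounded_iff_subset_closedBall 0]
      refine ⟨ε⁻¹, ?_⟩
      rintro _ ⟨z, rfl⟩
      rw [Metric.mem_closedBall, dist_zero_right, norm_inv]
      refine inv_anti₀ ?_ ?_
      · exact hε
      · have := hxε (φ z) (Set.mem_range_self z)
        rwa [dist_comm, Complex.dist_eq] at this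
    have heq := hdiff.apply_eq_apply_of_bounded hbdd s t
    have : φ s - x = φ t - x := inv_injective heq
    exact hne (sub_left_inj.mp this)
  have hEq : Set.EqOn (fun z => lap (polyMap p) z) 0 (closure (Set.range φ)) := by
    apply Set.EqOn.closure _ hQcont continuous_const
    rintro _ ⟨z, rfl⟩
    exact hQφ z
  obtain ⟨z0, hz0⟩ := hnz
  exact hz0 (hEq (by rw [hdense.closure_eq]; trivial))
end

section
/- Let (X, d) be a complete metric space and let M : X → ℝ≥0 be a locally bounded function. Then for every σ > 0 and every u ∈ X with M(u) > 0 there exists v ∈ X such that: (i) d(u, v) ≤ 2/(σ M(u)); (ii) M(v) ≥ M(u); and (iii) M(x) ≤ 2 M(v) for every x ∈ X with d(x, v) ≤ 1/(σ M(v)). -/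
open Topology

/-- **Berteloot's localization lemma.** Let `(X, d)` be a complete metric space and
`M : X → ℝ≥0` a locally bounded function. Then for every `σ > 0` and every `u ∈ X` with
`M u > 0` there is `v ∈ X` with `d(u,v) ≤ 2/(σ M(u))`, `M(v) ≥ M(u)`, and `M(x) ≤ 2 M(v)`
whenever `d(x,v) ≤ 1/(σ M(v))`. -/
theorem exists_pt_of_locally_bounded
    {X : Type*} [MetricSpace X] [CompleteSpace X]
    (M : X → NNReal)
    (hloc : ∀ x : X, ∃ s ∈ 𝓝 x, ∃ C : NNReal, ∀ y ∈ s, M y ≤ C)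
    (σ : ℝ) (hσ : 0 < σ) (u : X) (hu : 0 < M u) :
    ∃ v : X,
      dist u v ≤ 2 / (σ * (M u : ℝ)) ∧
      M u ≤ M v ∧
      ∀ x : X, dist x v ≤ 1 / (σ * (M v : ℝ)) → M x ≤ 2 * M v := by
  by_contra hcon
  push_neg at hcon
  have hMu : (0:ℝ) < (M u : ℝ) := by exact_mod_cast hu
  have hd : (0:ℝ) < σ * (M u : ℝ) := mul_pos hσ hMu
  have step : ∀ n : ℕ, ∀ v : X, 2^n * M u ≤ M v →
      dist u v ≤ (2 - 2*(1/2:ℝ)^n)/(σ * (M u : ℝ)) →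
      ∃ x, dist x v ≤ (1/2:ℝ)^n/(σ * (M u : ℝ)) ∧ 2^(n+1) * M u ≤ M x ∧
        dist u x ≤ (2 - 2*(1/2:ℝ)^(n+1))/(σ * (M u : ℝ)) := by
    intro n v hv hdv
    have h1 : M u ≤ M v := by
      refine le_trans ?_ hv
      exact le_mul_of_one_le_left zero_le (one_le_pow₀ one_le_two)
    have hdv2 : dist u v ≤ 2 / (σ * (M u : ℝ)) := by
      refine le_trans hdv ?_
      have hp : (0:ℝ) ≤ (1/2:ℝ)^n := by positivity
      apply div_le_div_of_nonneg_right ?_ hd.le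
      · linarith
    obtain ⟨x, hx1, hx2⟩ := hcon v hdv2 h1
    have hpowR : (2:ℝ)^n * (M u : ℝ) ≤ (M v : ℝ) := by exact_mod_cast hv
    have hx1' : dist x v ≤ (1/2:ℝ)^n/(σ * (M u : ℝ)) := by
      refine le_trans hx1 ?_
      have h2 : σ * ((2:ℝ)^n * (M u : ℝ)) ≤ σ * (M v : ℝ) :=
        mul_le_mul_of_nonneg_left hpowR hσ.le
      have h3 : (0:ℝ) < σ * ((2:ℝ)^n * (M u : ℝ)) := by positivity
      calc 1 / (σ * (M v : ℝ)) ≤ 1 / (σ * ((2:ℝ)^n * (M u : ℝ))) :=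
            one_div_le_one_div_of_le h3 h2
        _ = (1/2:ℝ)^n/(σ * (M u : ℝ)) := by
            rw [one_div, mul_inv, div_eq_mul_inv]
            field_simp
            rw [← mul_pow]; norm_num
    refine ⟨x, hx1', ?_, ?_⟩
    · calc 2^(n+1) * M u = 2 * (2^n * M u) := by ring
        _ ≤ 2 * M v := mul_le_mul_of_nonneg_left hv zero_le
        _ ≤ M x := hx2.le
    · calc dist u x ≤ dist u v + dist x v := by
            rw [dist_comm x v]; exact dist_triangle u v x
        _ ≤ (2 - 2*(1/2:ℝ)^n)/(σ * (M u : ℝ)) + (1/2:ℝ)^n/(σ * (M u : ℝ)) :=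
            add_le_add hdv hx1'
        _ = (2 - 2*(1/2:ℝ)^(n+1))/(σ * (M u : ℝ)) := by
            rw [← add_div]; ring_nf
  -- build the sequence
  let T : ℕ → Type _ := fun n =>
    {v : X // 2^n * M u ≤ M v ∧ dist u v ≤ (2 - 2*(1/2:ℝ)^n)/(σ * (M u : ℝ))}
  have base : T 0 := ⟨u, by simp, by simp⟩
  let nxt : ∀ n, T n → T (n+1) := fun n t =>
    ⟨(step n t.1 t.2.1 t.2.2).choose, (step n t.1 t.2.1 t.2.2).choose_spec.2.1,
      (step n t.1 t.2.1 t.2.2).choose_spec.2.2⟩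
  let g : ∀ n, T n := fun n => Nat.rec base nxt n
  let f : ℕ → X := fun n => (g n).1
  have hfd : ∀ n, dist (f n) (f (n+1)) ≤ (1/(σ * (M u : ℝ))) * (1/2:ℝ)^n := by
    intro n
    have h := (step n (g n).1 (g n).2.1 (g n).2.2).choose_spec.1
    have heq : f (n+1) = (step n (g n).1 (g n).2.1 (g n).2.2).choose := rfl
    rw [heq, dist_comm]
    calc dist _ (f n) ≤ (1/2:ℝ)^n/(σ * (M u : ℝ)) := h
      _ = (1/(σ * (M u : ℝ))) * (1/2:ℝ)^n := by ring
  have hcauchy : CauchySeq f :=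
    cauchySeq_of_le_geometric (1/2:ℝ) (1/(σ * (M u : ℝ))) (by norm_num) hfd
  obtain ⟨w, hw⟩ := cauchySeq_tendsto_of_complete hcauchy
  obtain ⟨s, hs, C, hC⟩ := hloc w
  have hev : ∀ᶠ n in Filter.atTop, f n ∈ s := hw.eventually_mem hs
  obtain ⟨N, hN⟩ := Filter.eventually_atTop.1 hev
  obtain ⟨n0, hn0⟩ := pow_unbounded_of_one_lt (R := NNReal) (C / M u) one_lt_two
  have hn0' : C < 2^n0 * M u := by
    rwa [div_lt_iff₀ hu] at hn0
  set m := max N n0 with hm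
  have h1 : M (f m) ≤ C := hC _ (hN m (le_max_left _ _))
  have h2 : 2^n0 * M u ≤ M (f m) := by
    refine le_trans ?_ (g m).2.1
    exact mul_le_mul_of_nonneg_right (pow_le_pow_right₀ one_le_two (le_max_right _ _)) zero_le
  exact absurd (le_trans h2 h1) (not_le.2 hn0')
end
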